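/- Let 𝒜 ⊆ ℂ^{n×n} be a matrix *-algebra and let π_𝒜 : ℂ^{n×n} → 𝒜 be the orthogonal projection onto 𝒜 with respect to the trace inner product ⟨X, Y⟩ = trace(Y*X). If X ∈ ℂ^{n×n} is positive semidefinite, then π_𝒜(X) is positive semidefinite. -/

import Mathlib

open Matrix ComplexOrder

open Polynomial in
lemma aux_aeval_conj {n : ℕ} (U : Matrix (Fin n) (Fin n) ℂ) (hU : Uᴴ * U = 1)
    (w : Fin n → ℂ) (q : Polynomial ℂ) :
    Polynomial.aeval (U * Matrix.diagonal w * Uᴴ) q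
      = U * Matrix.diagonal (fun i => q.eval (w i)) * Uᴴ := by
  have hU' : U * Uᴴ = 1 := mul_eq_one_comm.mp hU
  have hpow : ∀ k : ℕ, (U * Matrix.diagonal w * Uᴴ) ^ k
      = U * Matrix.diagonal (fun i => w i ^ k) * Uᴴ := by
    intro k
    induction k with
    | zero => simp [hU']
    | succ k ih =>
        rw [pow_succ, ih]
        calc (U * Matrix.diagonal (fun i => w i ^ k) * Uᴴ) * (U * Matrix.diagonal w * Uᴴ)
            = U * (Matrix.diagonal (fun i => w i ^ k) * (Uᴴ * U) * Matrix.diagonal w) * Uᴴ := by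
              simp only [Matrix.mul_assoc]
          _ = U * Matrix.diagonal (fun i => w i ^ (k + 1)) * Uᴴ := by
              rw [hU, mul_one, Matrix.diagonal_mul_diagonal]
              simp [pow_succ]
  induction q using Polynomial.induction_on' with
  | add p q hp hq =>
      rw [map_add, hp, hq]
      have hfun : (fun i => (p + q).eval (w i))
          = fun i => p.eval (w i) + q.eval (w i) := funext fun i => by simp
      rw [hfun, ← Matrix.diagonal_add, Matrix.mul_add, Matrix.add_mul]
  | monomial k a =>
      rw [Polynomial.aeval_monomial, ← Algebra.smul_def, hpow]
      have hfun : (fun i => (Polynomial.monomial k a).eval (w i))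
          = a • fun i => w i ^ k := funext fun i => by simp [Polynomial.eval_monomial]
      rw [hfun, Matrix.diagonal_smul, Matrix.mul_smul, Matrix.smul_mul]

lemma aux_aeval_mem {n : ℕ} (𝒜 : Submodule ℂ (Matrix (Fin n) (Fin n) ℂ))
    (hmul : ∀ X ∈ 𝒜, ∀ Y ∈ 𝒜, X * Y ∈ 𝒜)
    {A : Matrix (Fin n) (Fin n) ℂ} (hA : A ∈ 𝒜) (q : Polynomial ℂ) (hq : q.coeff 0 = 0) :
    Polynomial.aeval A q ∈ 𝒜 := by
  have hpow : ∀ k : ℕ, A ^ (k + 1) ∈ 𝒜 := by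
    intro k
    induction k with
    | zero => simpa using hA
    | succ k ih => rw [pow_succ]; exact hmul _ ih _ hA
  have key : ∀ r : Polynomial ℂ, A * Polynomial.aeval A r ∈ 𝒜 := by
    intro r
    induction r using Polynomial.induction_on' with
    | add p q hp hq =>
        rw [map_add, mul_add]; exact 𝒜.add_mem hp hq
    | monomial k a =>
        have : A * (Polynomial.aeval A (Polynomial.monomial k a)) = a • A ^ (k + 1) := by
          rw [Polynomial.aeval_monomial, ← Algebra.smul_def, mul_smul_comm, ← pow_succ']
        rw [this]
        exact 𝒜.smul_mem a (hpow k)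
  have h1 : q = Polynomial.X * q.divX := by
    conv_lhs => rw [← Polynomial.X_mul_divX_add q]
    rw [hq, map_zero, add_zero]
  rw [h1, _root_.map_mul, Polynomial.aeval_X]
  exact key _

lemma aux_trace_nonneg {n : ℕ} {M : Matrix (Fin n) (Fin n) ℂ} (hM : M.PosSemidef) :
    0 ≤ M.trace := by
  rw [Matrix.trace]
  apply Finset.sum_nonneg
  intro i _
  exact hM.diag_nonneg

lemma aux_eq_zero_of_trace {n : ℕ} {E : Matrix (Fin n) (Fin n) ℂ}
    (h : (Eᴴ * E).trace = 0) : E = 0 := by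
  have h2 : ∀ j i, E i j = 0 := by
    have hre : (∑ j, ∑ i, Complex.normSq (E i j) : ℝ) = 0 := by
      have : (Eᴴ * E).trace = ∑ j, ∑ i, (Complex.normSq (E i j) : ℂ) := by
        rw [Matrix.trace]
        congr 1
        funext j
        simp [Matrix.mul_apply, Matrix.diag, Matrix.conjTranspose_apply, Complex.normSq_eq_conj_mul_self]
      rw [this] at h
      have := congrArg Complex.re h
      simpa using this
    intro j i
    have hj : ∀ j ∈ Finset.univ, (0:ℝ) ≤ ∑ i, Complex.normSq (E i j) :=
      fun j _ => Finset.sum_nonneg fun i _ => Complex.normSq_nonneg _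
    have hz := (Finset.sum_eq_zero_iff_of_nonneg hj).mp hre j (Finset.mem_univ j)
    have hz2 := (Finset.sum_eq_zero_iff_of_nonneg
      (fun i _ => Complex.normSq_nonneg (E i j))).mp hz i (Finset.mem_univ i)
    exact Complex.normSq_eq_zero.mp hz2
  ext i j
  simp [h2 j i]

/-- The orthogonal projection (with respect to the trace inner
product `⟨X, Y⟩ = trace (Yᴴ * X)`) of `ℂ^{n×n}` onto a matrix *-algebra `𝒜`
maps positive semidefinite matrices to positive semidefinite matrices. -/
theorem orthogonal_projection_onto_star_algebra_posSemidef {n : ℕ}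
    (𝒜 : Submodule ℂ (Matrix (Fin n) (Fin n) ℂ))
    (hmul : ∀ X ∈ 𝒜, ∀ Y ∈ 𝒜, X * Y ∈ 𝒜)
    (hstar : ∀ X ∈ 𝒜, Xᴴ ∈ 𝒜)
    (p : Matrix (Fin n) (Fin n) ℂ →ₗ[ℂ] Matrix (Fin n) (Fin n) ℂ)
    (hrange : ∀ X : Matrix (Fin n) (Fin n) ℂ, p X ∈ 𝒜)
    (hid : ∀ X ∈ 𝒜, p X = X)
    (horth : ∀ X : Matrix (Fin n) (Fin n) ℂ, ∀ B ∈ 𝒜, (Bᴴ * (X - p X)).trace = 0)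
    (X : Matrix (Fin n) (Fin n) ℂ) (hX : X.PosSemidef) :
    (p X).PosSemidef := by
  classical
  have hXH : Xᴴ = X := hX.1
  -- key orthogonality reformulation
  have key : ∀ B ∈ 𝒜, (Bᴴ * X).trace = (Bᴴ * p X).trace := by
    intro B hB
    have := horth X B hB
    rw [Matrix.mul_sub, Matrix.trace_sub, sub_eq_zero] at this
    exact this
  -- p X is Hermitian
  have hAH : (p X).IsHermitian := by
    set E : Matrix (Fin n) (Fin n) ℂ := p X - (p X)ᴴ with hE
    have hEmem : E ∈ 𝒜 := 𝒜.sub_mem (hrange X) (hstar _ (hrange X))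
    have horthE : ∀ B ∈ 𝒜, (Bᴴ * (X - p X)ᴴ).trace = 0 := by
      intro B hB
      have h1 : (Bᴴ * (X - p X)ᴴ) = ((X - p X) * B)ᴴ := by
        rw [Matrix.conjTranspose_mul]
      rw [h1, Matrix.trace_conjTranspose]
      have h2 : ((X - p X) * B).trace = (Bᴴᴴ * (X - p X)).trace := by
        rw [Matrix.conjTranspose_conjTranspose, Matrix.trace_mul_comm]
      rw [h2, horth X Bᴴ (hstar _ hB), star_zero]
    have htr : (Eᴴ * E).trace = 0 := by
      have hsplit : Eᴴ * E = Eᴴ * (X - p X)ᴴ - Eᴴ * (X - p X) := by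
        rw [← Matrix.mul_sub]
        congr 1
        rw [hE]
        rw [Matrix.conjTranspose_sub, hXH]
        abel
      rw [hsplit, Matrix.trace_sub, horthE E hEmem, horth X E hEmem, sub_zero]
    have hE0 : E = 0 := aux_eq_zero_of_trace htr
    have := sub_eq_zero.mp hE0
    exact this.symm
  -- spectral decomposition of p X
  set A : Matrix (Fin n) (Fin n) ℂ := p X with hAdef
  set U : Matrix (Fin n) (Fin n) ℂ := (hAH.eigenvectorUnitary : Matrix (Fin n) (Fin n) ℂ) with hUdef
  have hU : Uᴴ * U = 1 := by
    rw [← Matrix.star_eq_conjTranspose]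
    exact Matrix.mem_unitaryGroup_iff'.mp hAH.eigenvectorUnitary.2
  have hU' : U * Uᴴ = 1 := mul_eq_one_comm.mp hU
  set lam : Fin n → ℝ := hAH.eigenvalues with hlam
  have hspec : A = U * Matrix.diagonal (fun i => (lam i : ℂ)) * Uᴴ := by
    have := hAH.spectral_theorem
    rw [Unitary.conjStarAlgAut_apply] at this
    rw [Matrix.star_eq_conjTranspose] at this
    exact this
  -- the negative part
  set m : Fin n → ℝ := fun i => max (-(lam i)) 0 with hm
  -- interpolation polynomial
  set s : Finset ℂ := insert 0 (Finset.image (fun i => (lam i : ℂ)) Finset.univ) with hs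
  set r : ℂ → ℂ := fun z => (max (-(z.re)) 0 : ℝ) with hr
  set q : Polynomial ℂ := Lagrange.interpolate s id r with hq
  have hinj : Set.InjOn id (s : Set ℂ) := Function.injective_id.injOn
  have hq0 : q.coeff 0 = 0 := by
    rw [Polynomial.coeff_zero_eq_eval_zero]
    have h0 : (0:ℂ) ∈ s := Finset.mem_insert_self 0 _
    have := Lagrange.eval_interpolate_at_node r hinj h0
    simp only [id] at this
    rw [hq, this, hr]
    simp
  have hqeval : ∀ i, q.eval ((lam i : ℂ)) = (m i : ℂ) := by
    intro i
    have hmemi : ((lam i : ℂ)) ∈ s :=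
      Finset.mem_insert_of_mem (Finset.mem_image_of_mem _ (Finset.mem_univ i))
    have := Lagrange.eval_interpolate_at_node r hinj hmemi
    simp only [id] at this
    rw [hq, this, hr, hm]
    simp
  set N : Matrix (Fin n) (Fin n) ℂ := U * Matrix.diagonal (fun i => (m i : ℂ)) * Uᴴ with hN
  have hNae : Polynomial.aeval A q = N := by
    rw [hspec, aux_aeval_conj U hU, hN]
    have hfun : (fun i => q.eval ((lam i : ℂ))) = fun i => (m i : ℂ) := funext hqeval
    rw [hfun]
  have hNmem : N ∈ 𝒜 := by
    rw [← hNae]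
    exact aux_aeval_mem 𝒜 hmul (hrange X) q hq0
  have hNH : Nᴴ = N := by
    rw [hN]
    simp only [Matrix.conjTranspose_mul, Matrix.conjTranspose_conjTranspose]
    rw [Matrix.diagonal_conjTranspose]
    have : star (fun i => (m i : ℂ)) = fun i => (m i : ℂ) := by
      funext i; simp
    rw [this, Matrix.mul_assoc]
  -- N² ∈ 𝒜
  have hN2mem : N * N ∈ 𝒜 := hmul _ hNmem _ hNmem
  have hN2 : N * N = U * Matrix.diagonal (fun i => (m i : ℂ) ^ 2) * Uᴴ := by
    rw [hN]
    calc (U * Matrix.diagonal (fun i => (m i : ℂ)) * Uᴴ) * (U * Matrix.diagonal (fun i => (m i : ℂ)) * Uᴴ)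
        = U * (Matrix.diagonal (fun i => (m i : ℂ)) * (Uᴴ * U) * Matrix.diagonal (fun i => (m i : ℂ))) * Uᴴ := by
          simp only [Matrix.mul_assoc]
      _ = U * Matrix.diagonal (fun i => (m i : ℂ) ^ 2) * Uᴴ := by
          rw [hU, mul_one, Matrix.diagonal_mul_diagonal]
          simp [pow_two]
  -- trace (N * X * N) ≥ 0
  have hPSD : (N * X * Nᴴ).PosSemidef := hX.mul_mul_conjTranspose_same N
  have htrNXN : 0 ≤ (N * X * N).trace := by
    have := aux_trace_nonneg hPSD
    rwa [hNH] at this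
  -- trace (N * X * N) = trace ((N²)ᴴ * X)
  have htr1 : (N * X * N).trace = ((N * N)ᴴ * X).trace := by
    rw [Matrix.conjTranspose_mul, hNH]
    exact Matrix.trace_mul_cycle N X N
  -- = trace ((N²)ᴴ * A)
  have htr2 : ((N * N)ᴴ * X).trace = ((N * N)ᴴ * A).trace := key (N * N) hN2mem
  -- compute trace ((N²)ᴴ * A)
  have htr3 : ((N * N)ᴴ * A).trace = -((∑ i, (m i) ^ 3 : ℝ) : ℂ) := by
    have hc : (N * N)ᴴ = N * N := by
      rw [Matrix.conjTranspose_mul, hNH]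
    rw [hc, hN2, hspec]
    have : (U * Matrix.diagonal (fun i => (m i : ℂ) ^ 2) * Uᴴ) * (U * Matrix.diagonal (fun i => (lam i : ℂ)) * Uᴴ)
        = U * Matrix.diagonal (fun i => (m i : ℂ) ^ 2 * (lam i : ℂ)) * Uᴴ := by
      calc (U * Matrix.diagonal (fun i => (m i : ℂ) ^ 2) * Uᴴ) * (U * Matrix.diagonal (fun i => (lam i : ℂ)) * Uᴴ)
          = U * (Matrix.diagonal (fun i => (m i : ℂ) ^ 2) * (Uᴴ * U) * Matrix.diagonal (fun i => (lam i : ℂ))) * Uᴴ := by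
            simp only [Matrix.mul_assoc]
        _ = _ := by
            rw [hU, mul_one, Matrix.diagonal_mul_diagonal]
    rw [this, Matrix.trace_mul_cycle, hU, one_mul, Matrix.trace_diagonal]
    have hterm : ∀ i, (m i : ℂ) ^ 2 * (lam i : ℂ) = -(((m i) ^ 3 : ℝ) : ℂ) := by
      intro i
      have hre : (m i) ^ 2 * (lam i) = -((m i) ^ 3) := by
        rcases le_or_gt 0 (lam i) with h | h
        · have h0 : m i = 0 := max_eq_right (neg_nonpos_of_nonneg h)
          rw [h0]; ring
        · have h0 : m i = -(lam i) := max_eq_left (le_of_lt (neg_pos.mpr h))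
          rw [h0]; ring
      calc ((m i : ℂ)) ^ 2 * ((lam i : ℂ)) = (((m i) ^ 2 * (lam i) : ℝ) : ℂ) := by
            push_cast; ring
        _ = -(((m i) ^ 3 : ℝ) : ℂ) := by rw [hre]; push_cast; ring
    rw [Finset.sum_congr rfl (fun i _ => hterm i), Finset.sum_neg_distrib]
    norm_cast
  -- conclude each m i = 0
  have hsum : (∑ i, (m i) ^ 3 : ℝ) ≤ 0 := by
    have h0 : 0 ≤ -((∑ i, (m i) ^ 3 : ℝ) : ℂ) := by
      rw [← htr3, ← htr2, ← htr1]
      exact htrNXN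
    have := Complex.le_def.mp h0
    have hre := this.1
    simp only [Complex.neg_re, Complex.ofReal_re, Complex.zero_re] at hre
    linarith
  have hmz : ∀ i, m i = 0 := by
    have hnn : ∀ i ∈ Finset.univ, (0:ℝ) ≤ (m i) ^ 3 := by
      intro i _
      have : 0 ≤ m i := le_max_right _ _
      positivity
    have hsum0 : (∑ i, (m i) ^ 3 : ℝ) = 0 :=
      le_antisymm hsum (Finset.sum_nonneg hnn)
    intro i
    have h3 := (Finset.sum_eq_zero_iff_of_nonneg hnn).mp hsum0 i (Finset.mem_univ i)
    exact pow_eq_zero_iff (by norm_num : (3:ℕ) ≠ 0) |>.mp h3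
  -- eigenvalues nonneg
  apply (Matrix.IsHermitian.posSemidef_iff_eigenvalues_nonneg hAH).mpr
  intro i
  show (0:ℝ) ≤ lam i
  have h := hmz i
  have h1 : -(lam i) ≤ 0 := h ▸ le_max_left (-(lam i)) 0
  linarith
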